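/- Let R be a nonzero commutative ring with a subset S and a family T satisfying (N1), (N2), (N3), with |S| ≥ 2. Then every element s ∈ S satisfies s + s = 0, i.e., R has characteristic 2 on S. -/
import Mathlib


/-- Under (N1), (N2), (N3) and `S` having at least two elements,
every `s ∈ S` satisfies `s + s = 0`. -/
theorem stmt_4 {R : Type*} [CommRing R] [Nontrivial R] (S T : Set R)
    (hS : ∃ a ∈ S, ∃ b ∈ S, a ≠ b)
    (hN1 : ∀ x : R, ∃! F : Finset R, ↑F ⊆ S ∧ ∑ a ∈ F, a = x)
    (hN2 : ∀ t ∈ T, ∀ s ∈ S, t * s = 0 ∨ t * s = s)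
    (hN3 : ∀ s ∈ S, ∀ s' ∈ S, s ≠ s' →
      ∃ t ∈ T, (t * s = 0 ∧ t * s' ≠ 0) ∨ (t * s ≠ 0 ∧ t * s' = 0)) :
    ∀ s ∈ S, s + s = 0 := by
  classical
  -- 0 ∉ S, since otherwise ∅ and {0} would both represent 0
  have h0S : (0 : R) ∉ S := by
    intro h0
    obtain ⟨F0, hF0, huniq⟩ := hN1 (0 : R)
    have h1 : ({0} : Finset R) = F0 := huniq _ ⟨by simpa using h0, by simp⟩
    have h2 : (∅ : Finset R) = F0 := huniq _ ⟨by simp, by simp⟩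
    rw [← h2] at h1
    simpa using h1
  intro s hs
  obtain ⟨F, ⟨hFS, hFsum⟩, hFuniq⟩ := hN1 (s + s)
  have hall : ∀ a ∈ F, a = s := by
    intro a haF
    by_contra hne
    have haS : a ∈ S := hFS haF
    obtain ⟨t, htT, hcase⟩ := hN3 s hs a haS (fun h => hne h.symm)
    set G := F.filter (fun x => t * x = x) with hG
    have hGS : (G : Set R) ⊆ S := fun x hx =>
      hFS (Finset.mem_coe.mpr (Finset.mem_of_mem_filter x (Finset.mem_coe.mp hx)))
    have hGsum : ∑ x ∈ G, x = t * (s + s) := by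
      rw [← hFsum, Finset.mul_sum, hG, Finset.sum_filter]
      apply Finset.sum_congr rfl
      intro x hx
      rcases hN2 t htT x (hFS hx) with h0 | h1
      · rw [if_neg, h0]
        intro h
        rw [h0] at h
        exact h0S (h ▸ hFS hx)
      · rw [if_pos h1, h1]
    rcases hcase with ⟨hts, hta⟩ | ⟨hts, hta⟩
    · -- t*s = 0, t*a ≠ 0, so t*a = a and t*(s+s) = 0, G = ∅ but a ∈ G
      have htaa : t * a = a := (hN2 t htT a haS).resolve_left hta
      have hG0 : ∑ x ∈ G, x = 0 := by rw [hGsum, mul_add, hts]; ring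
      obtain ⟨F0, hF0, huniq⟩ := hN1 (0 : R)
      have h1 : G = F0 := huniq _ ⟨hGS, hG0⟩
      have h2 : (∅ : Finset R) = F0 := huniq _ ⟨by simp, by simp⟩
      have hGempty : G = ∅ := by rw [h1, ← h2]
      have : a ∈ G := Finset.mem_filter.mpr ⟨haF, htaa⟩
      rw [hGempty] at this
      simp at this
    · -- t*s ≠ 0, t*a = 0, so t*s = s, t*(s+s) = s+s, G = F but a ∉ G
      have htss : t * s = s := (hN2 t htT s hs).resolve_left hts
      have hGss : ∑ x ∈ G, x = s + s := by rw [hGsum, mul_add, htss]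
      have hGF : G = F := hFuniq _ ⟨hGS, hGss⟩
      have : a ∈ G := hGF ▸ haF
      have htaa' : t * a = a := (Finset.mem_filter.mp this).2
      rw [hta] at htaa'
      exact h0S (htaa' ▸ haS)
  have hsub : F ⊆ {s} := fun x hx => Finset.mem_singleton.mpr (hall x hx)
  rcases Finset.subset_singleton_iff.mp hsub with hFe | hFe
  · rw [hFe] at hFsum; simpa using hFsum.symm
  · rw [hFe] at hFsum
    simp at hFsum
    have : s = 0 := by linear_combination hFsum
    rw [this]; ring
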